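/- Let Φ be an ortho-additive range-contractive map on a von Neumann algebra M, and let V be a partial isometry in M with initial projection P = V*V and final projection Q = VV* satisfying PQ = 0. Then for every A ∈ M and every B ∈ PMP, Φ(VBA) = VB·Φ(A). In particular, Φ(VA) = V·Φ(A) for every A ∈ M. -/

import Mathlib

noncomputable section

namespace Stmt10

variable {H : Type*} [NormedAddCommGroup H] [InnerProductSpace ℂ H] [CompleteSpace H]

/-- The range projection of a bounded operator: the orthogonal projection of `H` onto the
closure of the range of `A` (equivalently, the smallest projection `P` with `P * A = A`). -/
noncomputable def rangeProjection (A : H →L[ℂ] H) : H →L[ℂ] H :=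
  haveI : CompleteSpace ((LinearMap.range (A : H →ₗ[ℂ] H)).topologicalClosure : Submodule ℂ H) :=
    (Submodule.isClosed_topologicalClosure _).completeSpace_coe
  (LinearMap.range (A : H →ₗ[ℂ] H)).topologicalClosure.subtypeL ∘L
    Submodule.orthogonalProjectionOnto (LinearMap.range (A : H →ₗ[ℂ] H)).topologicalClosure

/-- The order on projections: `P ≤ Q` iff `P * Q = P`. -/
def projLE (P Q : H →L[ℂ] H) : Prop := P * Q = P

/-- `Φ` is an ortho-additive map on `M`: it is additive on pairs of orthogonal elements. -/
def OrthoAdditive (M : VonNeumannAlgebra H) (Φ : (H →L[ℂ] H) → (H →L[ℂ] H)) : Prop :=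
  ∀ A ∈ M, ∀ B ∈ M, star A * B = 0 → Φ (A + B) = Φ A + Φ B

/-- `Φ` is a range-contractive map on `M`: `R(Φ A) ≤ R(A)` for all `A ∈ M`. -/
def RangeContractive (M : VonNeumannAlgebra H) (Φ : (H →L[ℂ] H) → (H →L[ℂ] H)) : Prop :=
  ∀ A ∈ M, projLE (rangeProjection (Φ A)) (rangeProjection A)

lemma rp_mul_self (A : H →L[ℂ] H) : rangeProjection A * A = A := by
  haveI : CompleteSpace ((LinearMap.range (A : H →ₗ[ℂ] H)).topologicalClosure : Submodule ℂ H) :=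
    (Submodule.isClosed_topologicalClosure _).completeSpace_coe
  ext x
  simp only [ContinuousLinearMap.mul_apply, rangeProjection, ContinuousLinearMap.coe_comp',
    Function.comp_apply, Submodule.coe_subtypeL', Submodule.coe_subtype]
  exact Submodule.starProjection_eq_self_iff.2
    (Submodule.le_topologicalClosure _ (LinearMap.mem_range_self _ x))

lemma mul_rp_eq_zero {D A : H →L[ℂ] H} (h : D * A = 0) : D * rangeProjection A = 0 := by
  haveI : CompleteSpace ((LinearMap.range (A : H →ₗ[ℂ] H)).topologicalClosure : Submodule ℂ H) :=
    (Submodule.isClosed_topologicalClosure _).completeSpace_coe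
  have hker : (LinearMap.range (A : H →ₗ[ℂ] H)).topologicalClosure ≤ LinearMap.ker (D : H →ₗ[ℂ] H) := by
    refine Submodule.topologicalClosure_minimal _ ?_ (ContinuousLinearMap.isClosed_ker D)
    rintro _ ⟨x, rfl⟩
    have : D (A x) = (D * A) x := rfl
    simp [LinearMap.mem_ker, this, h]
  ext x
  have hm : (rangeProjection A) x ∈ (LinearMap.range (A : H →ₗ[ℂ] H)).topologicalClosure := by
    simp only [rangeProjection, ContinuousLinearMap.coe_comp', Function.comp_apply,
      Submodule.coe_subtypeL', Submodule.coe_subtype]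
    exact Submodule.coe_mem _
  have := hker hm
  simpa [ContinuousLinearMap.mul_apply, LinearMap.mem_ker] using this

lemma rp_selfAdjoint (A : H →L[ℂ] H) : star (rangeProjection A) = rangeProjection A := by
  haveI : CompleteSpace ((LinearMap.range (A : H →ₗ[ℂ] H)).topologicalClosure : Submodule ℂ H) :=
    (Submodule.isClosed_topologicalClosure _).completeSpace_coe
  exact isSelfAdjoint_starProjection _

lemma self_eq_rp_mul (A : H →L[ℂ] H) : A = rangeProjection A * A := (rp_mul_self A).symm

/-- Master lemma: if `D * A = 0` and `R(B) ≤ R(A)` then `D * B = 0`. -/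
lemma zero_of_rp {D A B : H →L[ℂ] H} (hDA : D * A = 0)
    (h : projLE (rangeProjection B) (rangeProjection A)) : D * B = 0 := by
  have h' : rangeProjection A * rangeProjection B = rangeProjection B := by
    have := congrArg star h
    rwa [star_mul, rp_selfAdjoint, rp_selfAdjoint] at this
  have hB : B = rangeProjection A * B := by
    conv_lhs => rw [self_eq_rp_mul B, ← h', mul_assoc, ← self_eq_rp_mul B]
  rw [hB, ← mul_assoc, mul_rp_eq_zero hDA, zero_mul]


lemma corner_left {R : Type*} [Ring R] {p b : R} (hpp : p * p = p) (hb : p * b * p = b) :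
    p * b = b := by
  calc p * b = p * (p * b * p) := by rw [hb]
    _ = (p * p) * b * p := by noncomm_ring
    _ = p * b * p := by rw [hpp]
    _ = b := hb

lemma corner_right {R : Type*} [Ring R] {p b : R} (hpp : p * p = p) (hb : p * b * p = b) :
    b * p = b := by
  calc b * p = (p * b * p) * p := by rw [hb]
    _ = p * b * (p * p) := by noncomm_ring
    _ = p * b * p := by rw [hpp]
    _ = b := hb

/-- Let `Φ` be an ortho-additive range-contractive map on `M` and let
`V ∈ M` be a partial isometry with initial projection `P = V*V` and final projection
`Q = VV*` satisfying `PQ = 0`. Then `Φ (V B A) = V B (Φ A)` for all `A ∈ M` and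
`B ∈ PMP`; in particular `Φ (V A) = V (Φ A)` for all `A ∈ M`. -/
theorem stmt10 (M : VonNeumannAlgebra H)
    (Φ : (H →L[ℂ] H) → (H →L[ℂ] H))
    (hmaps : ∀ A ∈ M, Φ A ∈ M)
    (hadd : OrthoAdditive M Φ)
    (hrc : RangeContractive M Φ)
    (V : H →L[ℂ] H) (hV : V ∈ M)
    (hVpi : (star V * V) * (star V * V) = star V * V)
    (hPQ : (star V * V) * (V * star V) = 0) :
    (∀ A ∈ M, ∀ B ∈ M, (star V * V) * B * (star V * V) = B →
      Φ (V * B * A) = V * B * Φ A) ∧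
    (∀ A ∈ M, Φ (V * A) = V * Φ A) := by
  -- basic algebraic identities
  have hVVV : V * (star V * V) = V := by
    have key : star (V * (star V * V) - V) * (V * (star V * V) - V) = 0 := by
      have h := hVpi
      simp only [mul_assoc] at h
      simp [star_sub, star_mul, mul_sub, sub_mul, mul_assoc, h]
    have := (CStarRing.star_mul_self_eq_zero_iff _).1 key
    exact sub_eq_zero.1 this
  have hQV : (V * star V) * V = V := by rw [mul_assoc]; exact hVVV
  have hPV : (star V * V) * V = 0 := by
    calc (star V * V) * V = (star V * V) * ((V * star V) * V) := by rw [hQV]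
      _ = ((star V * V) * (V * star V)) * V := by noncomm_ring
      _ = 0 := by rw [hPQ, zero_mul]
  have hQQ : (V * star V) * (V * star V) = V * star V := by
    calc (V * star V) * (V * star V) = ((V * star V) * V) * star V := by noncomm_ring
      _ = V * star V := by rw [hQV]
  have hsQ : star (V * star V) = V * star V := by simp [star_mul]
  have hsQ' : star (1 - V * star V) = 1 - V * star V := by rw [star_sub, star_one, hsQ]
  have hQ1Q : (V * star V) * (1 - V * star V) = 0 := by
    rw [mul_sub, mul_one, hQQ, sub_self]
  have h1QV : (1 - V * star V) * V = 0 := by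
    rw [sub_mul, one_mul, hQV, sub_self]
  have h1QQ : (1 - V * star V) * (V * star V) = 0 := by
    rw [sub_mul, one_mul, hQQ, sub_self]
  -- Part 1
  have part1 : ∀ A ∈ M, ∀ B ∈ M, (star V * V) * B * (star V * V) = B →
      Φ (V * B * A) = V * B * Φ A := by
    intro A hA B hBM hB
    have hPB : (star V * V) * B = B := corner_left hVpi hB
    have hBP : B * (star V * V) = B := corner_right hVpi hB
    have hBQ : B * (V * star V) = 0 := by
      conv_lhs => rw [← hBP]
      rw [mul_assoc, hPQ, mul_zero]
    have hBV : B * V = 0 := by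
      conv_lhs => rw [← hBP]
      rw [mul_assoc, hPV, mul_zero]
    have hVBV : (V * B) * (V * B) = 0 := by
      rw [mul_assoc, ← mul_assoc B, hBV, zero_mul, mul_zero]
    -- decompose A
    set q : H →L[ℂ] H := V * star V with hq
    set A₁ : H →L[ℂ] H := q * A with hA₁def
    set A₂ : H →L[ℂ] H := (1 - q) * A with hA₂def
    have hqM : q ∈ M := mul_mem hV (star_mem hV)
    have h1qM : (1 : H →L[ℂ] H) - q ∈ M := sub_mem (one_mem M) hqM
    have hA₁M : A₁ ∈ M := mul_mem hqM hA
    have hA₂M : A₂ ∈ M := mul_mem h1qM hA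
    have hVBA₂M : V * B * A₂ ∈ M := mul_mem (mul_mem hV hBM) hA₂M
    have hXM : A₂ + V * B * A₂ ∈ M := add_mem hA₂M hVBA₂M
    -- key products
    have hqA₂ : q * A₂ = 0 := by
      rw [hA₂def, ← mul_assoc, hQ1Q, zero_mul]
    have h1qA₁ : (1 - q) * A₁ = 0 := by
      rw [hA₁def, ← mul_assoc, h1QQ, zero_mul]
    have h1qVBA₂ : (1 - q) * (V * B * A₂) = 0 := by
      rw [mul_assoc V B, ← mul_assoc, h1QV, zero_mul]
    have hsA₂V : star A₂ * V = 0 := by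
      rw [hA₂def, star_mul, hsQ', mul_assoc, h1QV, mul_zero]
    -- first split : Φ A = Φ A₁ + Φ A₂
    have horth1 : star A₁ * A₂ = 0 := by
      rw [hA₁def, hA₂def, star_mul, hsQ, mul_assoc, ← mul_assoc q, hQ1Q, zero_mul, mul_zero]
    have hAsum : A₁ + A₂ = A := by
      rw [hA₁def, hA₂def, ← add_mul]
      simp
    have split1 : Φ A = Φ A₁ + Φ A₂ := by
      rw [← hAsum]; exact hadd A₁ hA₁M A₂ hA₂M horth1
    -- second split : Φ (A₂ + V B A₂) = Φ A₂ + Φ (V B A₂)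
    have horth2 : star A₂ * (V * B * A₂) = 0 := by
      rw [mul_assoc V B, ← mul_assoc, hsA₂V, zero_mul]
    have split2 : Φ (A₂ + V * B * A₂) = Φ A₂ + Φ (V * B * A₂) :=
      hadd A₂ hA₂M (V * B * A₂) hVBA₂M horth2
    -- range facts
    have r1 : q * Φ A₂ = 0 := zero_of_rp hqA₂ (hrc A₂ hA₂M)
    have r2 : (1 - q) * Φ (V * B * A₂) = 0 := zero_of_rp h1qVBA₂ (hrc _ hVBA₂M)
    have r3 : (1 - q) * Φ A₁ = 0 := zero_of_rp h1qA₁ (hrc _ hA₁M)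
    have qfix2 : q * Φ (V * B * A₂) = Φ (V * B * A₂) := by
      have := r2
      rw [sub_mul, one_mul, sub_eq_zero] at this
      exact this.symm
    have qfix3 : q * Φ A₁ = Φ A₁ := by
      have := r3
      rw [sub_mul, one_mul, sub_eq_zero] at this
      exact this.symm
    have hVBq : (V * B) * q = 0 := by rw [mul_assoc, hBQ, mul_zero]
    -- the operator D = q - V*B kills X = A₂ + V*B*A₂
    have hDX : (q - V * B) * (A₂ + V * B * A₂) = 0 := by
      rw [sub_mul, mul_add, mul_add, hqA₂, zero_add]
      have e1 : q * (V * B * A₂) = V * B * A₂ := by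
        rw [mul_assoc V B, ← mul_assoc, hq, hQV]
      have e2 : (V * B) * (V * B * A₂) = 0 := by
        rw [← mul_assoc, hVBV, zero_mul]
      rw [e1, e2, add_zero, sub_self]
    have r4 : (q - V * B) * Φ (A₂ + V * B * A₂) = 0 := zero_of_rp hDX (hrc _ hXM)
    have hqX : q * Φ (A₂ + V * B * A₂) = (V * B) * Φ (A₂ + V * B * A₂) := by
      have := r4
      rwa [sub_mul, sub_eq_zero] at this
    -- conclude Φ (V B A₂) = V B Φ A₂
    have key : Φ (V * B * A₂) = V * B * Φ A₂ := by
      calc Φ (V * B * A₂) = q * Φ (A₂ + V * B * A₂) := by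
            rw [split2, mul_add, r1, zero_add, qfix2]
        _ = (V * B) * Φ (A₂ + V * B * A₂) := hqX
        _ = V * B * Φ A₂ := by
            rw [split2, mul_add, ← qfix2, ← mul_assoc, hVBq, zero_mul, add_zero]
    -- transfer to A
    have hVBA : V * B * A = V * B * A₂ := by
      rw [hA₂def, ← mul_assoc, mul_sub, mul_one]
      rw [show (V * B) * q = 0 from hVBq, sub_zero]
    have hVBΦA : V * B * Φ A = V * B * Φ A₂ := by
      rw [split1, mul_add, ← qfix3, ← mul_assoc, hVBq, zero_mul, zero_add]
    rw [hVBA, hVBΦA, key]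
  refine ⟨part1, ?_⟩
  -- Part 2: take B = star V * V
  intro A hA
  have hPmem : star V * V ∈ M := mul_mem (star_mem hV) hV
  have hPP : (star V * V) * (star V * V) * (star V * V) = star V * V := by
    rw [hVpi, hVpi]
  have := part1 A hA (star V * V) hPmem hPP
  have hVVV : V * (star V * V) = V := by
    have key : star (V * (star V * V) - V) * (V * (star V * V) - V) = 0 := by
      have h := hVpi
      simp only [mul_assoc] at h
      simp [star_sub, star_mul, mul_sub, sub_mul, mul_assoc, h]
    exact sub_eq_zero.1 ((CStarRing.star_mul_self_eq_zero_iff _).1 key)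
  rwa [hVVV] at this

end Stmt10
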